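/- Let T be a 2-dimensional complex triassociative algebra with basis {x, y} in which x ⊢ x = x and all other ⊢-products of basis elements are zero. Then x ⊣ x = x, x ⊣ y = 0, y ⊣ y = 0, and y ⊣ x = α₆ y with α₆ ∈ {0, 1}. -/

import Mathlib

/-- A triassociative algebra structure on a complex vector space `T`:
three bilinear operations `l` (⊢), `r` (⊣), `m` (⊥) satisfying the
11 Loday–Ronco identities. -/
structure Trias (T : Type*) [AddCommGroup T] [Module ℂ T] where
  l : T →ₗ[ℂ] T →ₗ[ℂ] T
  r : T →ₗ[ℂ] T →ₗ[ℂ] T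
  m : T →ₗ[ℂ] T →ₗ[ℂ] T
  A1 : ∀ x y z, l (l x y) z = l x (l y z)
  A2 : ∀ x y z, r (r x y) z = r x (r y z)
  D1 : ∀ x y z, l (r x y) z = l x (l y z)
  D2 : ∀ x y z, r (r x y) z = r x (l y z)
  S1 : ∀ x y z, r (l x y) z = l x (r y z)
  T1 : ∀ x y z, l (m x y) z = l x (l y z)
  T2 : ∀ x y z, r (r x y) z = r x (m y z)
  T3 : ∀ x y z, m (l x y) z = l x (m y z)
  T4 : ∀ x y z, r (m x y) z = m x (r y z)
  S2 : ∀ x y z, m (r x y) z = m x (l y z)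
  A3 : ∀ x y z, m (m x y) z = m x (m y z)

/-- In a 2-dimensional complex triassociative algebra with basis `{x, y}`
where `x⊢x = x` and all other `⊢`-products of basis elements vanish, one has
`x⊣x = x`, `x⊣y = 0`, `y⊣y = 0`, and `y⊣x = α₆y` with `α₆ ∈ {0, 1}`. -/
theorem stmt11 {T : Type*} [AddCommGroup T] [Module ℂ T]
    (b : Module.Basis (Fin 2) ℂ T) (A : Trias T)
    (x : T) (y : T) (hx : x = b 0) (hy : y = b 1)
    (h1 : A.l x x = x) (h2 : A.l x y = 0) (h3 : A.l y x = 0) (h4 : A.l y y = 0) :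
    A.r x x = x ∧ A.r x y = 0 ∧ A.r y y = 0 ∧
    ∃ α₆ : ℂ, (α₆ = 0 ∨ α₆ = 1) ∧ A.r y x = α₆ • y := by
  have hx0 : x ≠ 0 := hx ▸ b.ne_zero 0
  have hy0 : y ≠ 0 := hy ▸ b.ne_zero 1
  have hdec : ∀ v : T, v = (b.repr v 0) • x + (b.repr v 1) • y := by
    intro v
    conv_lhs => rw [← b.sum_repr v]
    simp only [Fin.sum_univ_two, hx, hy]
  have hlvx : ∀ v : T, A.l v x = (b.repr v 0) • x := by
    intro v
    conv_lhs => rw [hdec v]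
    simp [h1, h3]
  have hlxv : ∀ v : T, A.l x v = (b.repr v 0) • x := by
    intro v
    conv_rhs => rw [show ((b.repr v 0) • x : T) = A.l x ((b.repr v 0) • x + (b.repr v 1) • y) by
      simp [h1, h2]]
    rw [← hdec v]
  -- r x x = x
  have e1 : A.l (A.r x x) x = x := by
    have := A.D1 x x x; rw [h1, h1] at this; exact this
  have e2 : A.r x x = x := by
    have := A.S1 x x x
    rw [h1, hlxv, ← hlvx, e1] at this
    exact this
  -- r x y = 0
  have e3 : A.l (A.r x y) x = 0 := by
    have := A.D1 x y x; simp only [h3, h2, map_zero] at this; exact this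
  have e4 : A.r x y = 0 := by
    have := A.S1 x x y
    rw [h1, hlxv, ← hlvx, e3] at this
    exact this
  -- r y y = 0
  have e5 : b.repr (A.r y y) 0 = 0 := by
    have := A.D1 y y x
    rw [h3, hlvx] at this
    simp only [map_zero] at this
    rcases smul_eq_zero.mp this with h | h
    · exact h
    · exact absurd h hx0
  have e6 : A.r y y = (b.repr (A.r y y) 1) • y := by
    conv_lhs => rw [hdec (A.r y y)]
    rw [e5]; simp
  have e7 : A.r (A.r y y) y = 0 := by
    have := A.D2 y y y
    rw [h4] at this
    simpa using this
  have e8 : A.r y y = 0 := by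
    set c := b.repr (A.r y y) 1 with hc
    rw [e6] at e7
    simp only [map_smul, LinearMap.smul_apply] at e7
    rw [e6, smul_smul] at e7
    rcases smul_eq_zero.mp e7 with h | h
    · rw [e6, mul_self_eq_zero.mp h, zero_smul]
    · exact absurd h hy0
  -- r y x
  have e9 : b.repr (A.r y x) 0 = 0 := by
    have := A.D1 y x x
    rw [h1, h3, hlvx] at this
    rcases smul_eq_zero.mp this with h | h
    · exact h
    · exact absurd h hx0
  have e10 : A.r y x = (b.repr (A.r y x) 1) • y := by
    conv_lhs => rw [hdec (A.r y x)]
    rw [e9]; simp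
  set α := b.repr (A.r y x) 1 with hα
  have e11 : A.r (A.r y x) x = A.r y x := by
    have := A.D2 y x x; rw [h1] at this; exact this
  have e12 : (α * α) • y = α • y := by
    have h := e11
    rw [e10] at h
    simp only [map_smul, LinearMap.smul_apply] at h
    rw [e10, smul_smul] at h
    exact h
  have e13 : α = 0 ∨ α = 1 := by
    have : (α * α - α) • y = 0 := by rw [sub_smul, e12, sub_self]
    rcases smul_eq_zero.mp this with h | h
    · rcases mul_eq_zero.mp (by linear_combination h : α * (α - 1) = 0) with h' | h'
      · exact Or.inl h'
      · exact Or.inr (by linear_combination h')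
    · exact absurd h hy0
  exact ⟨e2, e4, e8, α, e13, e10⟩
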